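/- If F is a weakly convex sparseness measure with parameter ρ ≤ 0, then F is continuous on ℝ, the limit α = lim_{t→0⁺} F(t)/t exists and is a finite positive real number, and F(t) ≤ α·|t| holds for every t ∈ ℝ. -/

import Mathlib

open Filter Set

/-- Weak convexity on `[0,∞)` with parameter `ρ`. -/
def WeaklyConvexOnNonneg (F : ℝ → ℝ) (ρ : ℝ) : Prop :=
  ∀ t₁ t₂ : ℝ, 0 ≤ t₁ → 0 ≤ t₂ → ∀ l : ℝ, 0 ≤ l → l ≤ 1 →
    F (l * t₁ + (1 - l) * t₂) ≤
      l * F t₁ + (1 - l) * F t₂ - ρ * l * (1 - l) * (t₁ - t₂) ^ 2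

/-- `F` is a weakly convex sparseness measure with weak-convexity parameter `ρ ≤ 0`. -/
structure IsWCSM (F : ℝ → ℝ) (ρ : ℝ) : Prop where
  zero : F 0 = 0
  even : ∀ t, F (-t) = F t
  nontrivial : ∃ t, F t ≠ 0
  mono : ∀ s t : ℝ, 0 ≤ s → s ≤ t → F s ≤ F t
  ratio_anti : ∀ s t : ℝ, 0 < s → s ≤ t → F t / t ≤ F s / s
  rho_nonpos : ρ ≤ 0
  wconv : WeaklyConvexOnNonneg F ρ

/-- `α = lim_{t→0⁺} F(t)/t`, finite and positive, with `F(t) ≤ α|t|` for all `t`. -/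
def IsAlpha (F : ℝ → ℝ) (α : ℝ) : Prop :=
  0 < α ∧ Tendsto (fun t => F t / t) (nhdsWithin 0 (Set.Ioi 0)) (nhds α) ∧
    ∀ t : ℝ, F t ≤ α * |t|

/-- The generalized gradient set `∂F(t)`; by convention `∂F(0) = {0}`. -/
noncomputable def genGrad (F : ℝ → ℝ) (t : ℝ) : Set ℝ :=
  if t = 0 then {0}
  else {f : ℝ | ∀ ν : ℝ,
    ν * f ≤ Filter.limsup (fun θ => (F (t + θ * ν) - F t) / θ) (nhdsWithin 0 (Set.Ioi 0))}

/-- Euclidean (`ℓ2`) norm of a vector. -/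
noncomputable def l2 {n : ℕ} (x : Fin n → ℝ) : ℝ := Real.sqrt (∑ i, (x i) ^ 2)

/-- `ℓ1` norm of a vector. -/
def l1 {n : ℕ} (x : Fin n → ℝ) : ℝ := ∑ i, |x i|

/-- `ℓ0` "norm": number of nonzero entries. -/
noncomputable def l0 {n : ℕ} (x : Fin n → ℝ) : ℕ :=
  (Finset.univ.filter (fun i => x i ≠ 0)).card

/-- `z_S`: the vector equal to `z` on `S` and zero elsewhere. -/
def restr {n : ℕ} (x : Fin n → ℝ) (S : Finset (Fin n)) : Fin n → ℝ :=
  fun i => if i ∈ S then x i else 0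

/-- `γ` is a null-space-constant bound for `(J, A, K)`. -/
def NSCBound {M N : ℕ} (J : (Fin N → ℝ) → ℝ) (A : Matrix (Fin M) (Fin N) ℝ)
    (K : ℕ) (γ : ℝ) : Prop :=
  ∀ z : Fin N → ℝ, A.mulVec z = 0 → ∀ S : Finset (Fin N), S.card ≤ K →
    J (restr z S) ≤ γ * J (restr z Sᶜ)

/-- Spectral norm (`ℓ2`-operator norm) of a matrix. -/
noncomputable def opNorm2 {m n : ℕ} (A : Matrix (Fin m) (Fin n) ℝ) : ℝ :=
  sSup {c : ℝ | ∃ v : Fin n → ℝ, l2 v ≤ 1 ∧ c = l2 (A.mulVec v)}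

/-- a weakly convex sparseness measure is continuous, the limit
`α = lim_{t→0⁺} F(t)/t` exists, is finite and positive, and `F(t) ≤ α|t|` for all `t`. -/
theorem stmt0 (F : ℝ → ℝ) (ρ : ℝ) (hF : IsWCSM F ρ) :
    Continuous F ∧ ∃ α : ℝ, 0 < α ∧
      Tendsto (fun t => F t / t) (nhdsWithin 0 (Set.Ioi 0)) (nhds α) ∧
      ∀ t : ℝ, F t ≤ α * |t| := by
  -- nonnegativity of F
  have hnn : ∀ t : ℝ, 0 ≤ F t := by
    intro t
    rcases le_or_gt 0 t with h | h
    · have := hF.mono 0 t le_rfl h; rwa [hF.zero] at this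
    · have := hF.mono 0 (-t) le_rfl (by linarith); rw [hF.zero, hF.even] at this; exact this
  set g : ℝ → ℝ := fun t => F t / t with hg
  -- antitone on Ioi 0
  have hanti : AntitoneOn g (Ioi 0) := by
    intro s hs t ht hst
    exact hF.ratio_anti s t hs hst
  -- bound near 0 : for 0 < t ≤ 1, g t ≤ F 1 - ρ
  have hbound : ∀ t : ℝ, 0 < t → g t ≤ F 1 - ρ := by
    intro t ht
    rcases le_or_gt t 1 with h1 | h1
    · have hw := hF.wconv 1 0 zero_le_one le_rfl t ht.le h1
      simp only [mul_one, mul_zero, add_zero, hF.zero, sub_zero, one_pow, mul_one] at hw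
      -- hw : F t ≤ t * F 1 - ρ * t * (1 - t)
      have : F t ≤ t * (F 1 - ρ) := by nlinarith [hF.rho_nonpos, ht.le, mul_nonneg (mul_nonneg ht.le ht.le) (neg_nonneg.mpr hF.rho_nonpos)]
      rw [hg]; simp only
      rw [div_le_iff₀ ht]; linarith [this]
    · have := hF.ratio_anti 1 t one_pos h1.le
      simp only [div_one] at this
      have h2 : g t ≤ F 1 := this
      linarith [hF.rho_nonpos]
  have hbdd : BddAbove (g '' Ioi 0) := by
    refine ⟨F 1 - ρ, ?_⟩
    rintro y ⟨t, ht, rfl⟩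
    exact hbound t ht
  set α := sSup (g '' Ioi 0) with hα
  have hαtend : Tendsto g (nhdsWithin 0 (Set.Ioi 0)) (nhds α) :=
    hanti.tendsto_nhdsGT hbdd
  have hle : ∀ t : ℝ, 0 < t → g t ≤ α := fun t ht =>
    le_csSup hbdd (mem_image_of_mem g ht)
  -- positivity of α
  have hαpos : 0 < α := by
    obtain ⟨t, htne⟩ := hF.nontrivial
    have htne' : t ≠ 0 := by intro h; rw [h, hF.zero] at htne; exact htne rfl
    have habs : 0 < F |t| := by
      rcases lt_or_gt_of_ne htne' with h | h
      · have : F (-t) = F t := hF.even t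
        rw [abs_of_neg h]
        rw [this]
        exact lt_of_le_of_ne (hnn t) (Ne.symm htne)
      · rw [abs_of_pos h]; exact lt_of_le_of_ne (hnn t) (Ne.symm htne)
    have htpos : 0 < |t| := abs_pos.mpr htne'
    have : 0 < g |t| := div_pos habs htpos
    exact lt_of_lt_of_le this (hle _ htpos)
  -- F t ≤ α |t|
  have hαbd : ∀ t : ℝ, F t ≤ α * |t| := by
    intro t
    rcases lt_trichotomy t 0 with h | h | h
    · have h' : 0 < -t := by linarith
      have := hle (-t) h'
      rw [hg] at this; simp only at this
      rw [div_le_iff₀ h'] at this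
      rw [← hF.even t, abs_of_neg h]
      linarith [this]
    · rw [h, hF.zero, abs_zero, mul_zero]
    · have := hle t h
      rw [hg] at this; simp only at this
      rw [div_le_iff₀ h] at this
      rw [abs_of_pos h]; linarith [this]
  -- convexity of G = F - ρ t² on Ici 0
  have hG : ConvexOn ℝ (Ici 0) (fun t => F t - ρ * t ^ 2) := by
    refine ⟨convex_Ici 0, ?_⟩
    intro x hx y hy a b ha hb hab
    simp only [smul_eq_mul]
    have hw := hF.wconv x y hx hy a ha (by linarith)
    have hb' : b = 1 - a := by linarith
    subst hb'
    nlinarith [hw, sq_nonneg (x - y)]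
  have hGc : ContinuousOn (fun t => F t - ρ * t ^ 2) (Ioi 0) :=
    (hG.subset Ioi_subset_Ici_self (convex_Ioi 0)).continuousOn isOpen_Ioi
  have hFc : ContinuousOn F (Ioi 0) := by
    have : ContinuousOn (fun t => (F t - ρ * t ^ 2) + ρ * t ^ 2) (Ioi 0) :=
      hGc.add (Continuous.continuousOn (by continuity))
    simpa using this
  -- continuity of F everywhere
  have hcont : Continuous F := by
    rw [continuous_iff_continuousAt]
    intro x
    rcases lt_trichotomy x 0 with h | h | h
    · have hx : ContinuousAt F (-x) :=
        hFc.continuousAt (isOpen_Ioi.mem_nhds (by simpa using h))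
      have : ContinuousAt (fun t => F (-t)) x := hx.comp (continuousAt_neg)
      have heq : (fun t : ℝ => F (-t)) = F := funext fun t => hF.even t
      rwa [heq] at this
    · subst h
      rw [ContinuousAt, hF.zero]
      have h1 : Tendsto (fun t : ℝ => α * |t|) (nhds 0) (nhds 0) := by
        have : Tendsto (fun t : ℝ => α * |t|) (nhds 0) (nhds (α * |(0:ℝ)|)) :=
          (continuous_const.mul continuous_abs).tendsto 0
        simpa using this
      exact squeeze_zero hnn hαbd h1
    · exact hFc.continuousAt (isOpen_Ioi.mem_nhds h)
  exact ⟨hcont, α, hαpos, hαtend, hαbd⟩
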